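/- Let 0 < δ < 1 and choose c > 0 with (c+1)^{−2} 2^{δ+1} > 1. Suppose (a_k)_{k≥0} is a nondecreasing real sequence with limit a < ∞. Then there exists a constant C₀(δ) > 0, depending only on δ (and the fixed c), such that Σ_{k=1}^∞ (a_k − a_{k-1})² 2^{k(δ+1)} ≥ C₀(δ) Σ_{k=1}^∞ (a − a_k)² 2^{k(δ+1)} (where the inequality is interpreted as holding trivially if both sides are +∞, and the left side is infinite whenever the right side is). -/

import Mathlib

open MeasureTheory ENNReal Filter Finset

lemma cs_tsum (f g : ℕ → ℝ≥0∞) :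
    (∑' n, f n * g n) ≤ (∑' n, (f n)^2)^((1:ℝ)/2) * (∑' n, (g n)^2)^((1:ℝ)/2) := by
  have hpq : Real.HolderConjugate 2 2 := Real.HolderConjugate.two_two
  have h := ENNReal.lintegral_mul_le_Lp_mul_Lq (Measure.count (α := ℕ)) hpq
      (f := f) (g := g) (Measurable.aemeasurable (by measurability))
      (Measurable.aemeasurable (by measurability))
  simpa [MeasureTheory.lintegral_count, ENNReal.rpow_two] using h

lemma cs_tsum_sq (f g : ℕ → ℝ≥0∞) :
    (∑' n, f n * g n)^2 ≤ (∑' n, (f n)^2) * (∑' n, (g n)^2) := by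
  calc (∑' n, f n * g n)^2
      ≤ ((∑' n, (f n)^2)^((1:ℝ)/2) * (∑' n, (g n)^2)^((1:ℝ)/2))^2 :=
        pow_le_pow_left' (cs_tsum f g) 2
    _ = (∑' n, (f n)^2) * (∑' n, (g n)^2) := by
        rw [mul_pow, ← ENNReal.rpow_natCast ((∑' n, (f n)^2)^((1:ℝ)/2)) 2,
          ← ENNReal.rpow_natCast ((∑' n, (g n)^2)^((1:ℝ)/2)) 2,
          ← ENNReal.rpow_mul, ← ENNReal.rpow_mul]
        norm_num


/-- The good/bad index lemma: for nondecreasing sequences with limit `A`,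
`Σ (a_k - a_{k-1})² 2^{k(δ+1)} ≥ C₀(δ) Σ (A - a_k)² 2^{k(δ+1)}`, the inequality being
interpreted in `ℝ≥0∞` so that it holds trivially when both sides are infinite. -/
theorem stmt4 (δ c : ℝ) (hδ0 : 0 < δ) (hδ1 : δ < 1) (hc : 0 < c)
    (hcδ : 1 < (c+1)⁻¹^2 * (2:ℝ)^(δ+1)) :
    ∃ C₀ : ℝ, 0 < C₀ ∧ ∀ (a : ℕ → ℝ) (A : ℝ), Monotone a →
      Filter.Tendsto a Filter.atTop (nhds A) →
      ENNReal.ofReal C₀ *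
          ∑' k : ℕ, ENNReal.ofReal ((A - a (k+1))^2 * (2:ℝ)^(((k:ℝ)+1)*(δ+1)))
        ≤ ∑' k : ℕ, ENNReal.ofReal ((a (k+1) - a k)^2 * (2:ℝ)^(((k:ℝ)+1)*(δ+1))) := by
  have hδ1' : (0:ℝ) < δ + 1 := by linarith
  set q : ℝ := (2:ℝ)^(δ+1) with hqdef
  set t : ℝ := (2:ℝ)^((δ+1)/2) with htdef
  set u : ℝ := (2:ℝ)^((δ+1)/4) with hudef
  have hq1 : 1 < q := (Real.one_lt_rpow_iff_of_pos (by norm_num)).mpr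
    (Or.inl ⟨one_lt_two, hδ1'⟩)
  have ht1 : 1 < t := (Real.one_lt_rpow_iff_of_pos (by norm_num)).mpr
    (Or.inl ⟨one_lt_two, by linarith⟩)
  have hu1 : 1 < u := (Real.one_lt_rpow_iff_of_pos (by norm_num)).mpr
    (Or.inl ⟨one_lt_two, by linarith⟩)
  have hq0 : (0:ℝ) < q := by linarith
  have ht0 : (0:ℝ) < t := by linarith
  have hu0 : (0:ℝ) < u := by linarith
  have hu2 : u^2 = t := by
    rw [hudef, htdef, ← Real.rpow_natCast ((2:ℝ)^((δ+1)/4)) 2,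
      ← Real.rpow_mul (by norm_num : (0:ℝ) ≤ 2)]
    congr 1
    push_cast
    ring
  have ht2 : t^2 = q := by
    rw [htdef, hqdef, ← Real.rpow_natCast ((2:ℝ)^((δ+1)/2)) 2,
      ← Real.rpow_mul (by norm_num : (0:ℝ) ≤ 2)]
    congr 1
    push_cast
    ring
  have htinv : t⁻¹ < 1 := inv_lt_one_of_one_lt₀ ht1
  refine ⟨(1 - t⁻¹)^2, pow_pos (by linarith) 2, ?_⟩
  intro a A hmono htend
  -- ENNReal constants
  set Q : ℝ≥0∞ := ENNReal.ofReal q with hQdef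
  set Tq : ℝ≥0∞ := ENNReal.ofReal t with hTqdef
  set U : ℝ≥0∞ := ENNReal.ofReal u with hUdef
  set Vu : ℝ≥0∞ := ENNReal.ofReal u⁻¹ with hVudef
  set W : ℝ≥0∞ := ENNReal.ofReal t⁻¹ with hWdef
  have hUVu : U * Vu = 1 := by
    rw [hUdef, hVudef, ← ENNReal.ofReal_mul hu0.le, mul_inv_cancel₀ hu0.ne',
      ENNReal.ofReal_one]
  have hTqW : Tq * W = 1 := by
    rw [hTqdef, hWdef, ← ENNReal.ofReal_mul ht0.le, mul_inv_cancel₀ ht0.ne',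
      ENNReal.ofReal_one]
  have hU2 : U^2 = Tq := by
    rw [hUdef, ← ENNReal.ofReal_pow hu0.le, hu2]
  have hVu2 : Vu^2 = W := by
    rw [hVudef, ← ENNReal.ofReal_pow (inv_nonneg.mpr hu0.le), inv_pow, hu2]
  have hTq2 : Tq^2 = Q := by
    rw [hTqdef, ← ENNReal.ofReal_pow ht0.le, ht2]
  have hQW : Q * W = Tq := by
    rw [hQdef, hWdef, hTqdef, ← ENNReal.ofReal_mul hq0.le]
    congr 1
    rw [← ht2, pow_two, mul_inv_cancel_right₀ ht0.ne']
  have hW1 : W < 1 := by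
    rw [hWdef, ← ENNReal.ofReal_one]
    exact (ENNReal.ofReal_lt_ofReal_iff one_pos).mpr htinv
  have h1W0 : (1 : ℝ≥0∞) - W ≠ 0 := by
    rw [← tsub_pos_iff_lt] at hW1
    exact hW1.ne'
  have h1Wtop : (1 : ℝ≥0∞) - W ≠ ⊤ := (tsub_le_self.trans_lt one_lt_top).ne
  have hQ1 : (1:ℝ≥0∞) ≤ Q := by
    rw [hQdef, ← ENNReal.ofReal_one]
    exact ENNReal.ofReal_le_ofReal hq1.le
  set c₂ : ℝ≥0∞ := (1 - W)⁻¹ with hc2def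
  -- basic sequence facts
  have haA : ∀ k, a k ≤ A := fun k => Monotone.ge_of_tendsto hmono htend k
  set B : ℕ → ℝ≥0∞ := fun j => ENNReal.ofReal (A - a j) with hBdef
  set D : ℕ → ℝ≥0∞ := fun i => ENNReal.ofReal (a (i+1) - a i) with hDdef
  -- rewrite the two sums
  have hpow : ∀ k : ℕ, (2:ℝ)^(((k:ℝ)+1)*(δ+1)) = q^(k+1) := by
    intro k
    rw [show ((k:ℝ)+1)*(δ+1) = (δ+1) * ((k+1 : ℕ):ℝ) by push_cast; ring,
      Real.rpow_mul (by norm_num : (0:ℝ) ≤ 2), Real.rpow_natCast]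
  have hLHS : ∀ k : ℕ, ENNReal.ofReal ((A - a (k+1))^2 * (2:ℝ)^(((k:ℝ)+1)*(δ+1)))
      = (B (k+1))^2 * Q^(k+1) := by
    intro k
    rw [hpow k, ENNReal.ofReal_mul (sq_nonneg _), ← ENNReal.ofReal_pow (by linarith [haA (k+1)]),
      ← ENNReal.ofReal_pow hq0.le]
  have hRHS : ∀ k : ℕ, ENNReal.ofReal ((a (k+1) - a k)^2 * (2:ℝ)^(((k:ℝ)+1)*(δ+1)))
      = (D k)^2 * Q^(k+1) := by
    intro k
    rw [hpow k, ENNReal.ofReal_mul (sq_nonneg _),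
      ← ENNReal.ofReal_pow (by linarith [hmono (Nat.le_succ k)]),
      ← ENNReal.ofReal_pow hq0.le]
  -- telescoping
  have hBD : ∀ j : ℕ, B j = ∑' n, D (j + n) := by
    intro j
    have hnn : ∀ n : ℕ, 0 ≤ a (j+n+1) - a (j+n) := fun n => by
      linarith [hmono (Nat.le_succ (j+n))]
    have hpart : ∀ N : ℕ, ∑ n ∈ Finset.range N, (a (j+n+1) - a (j+n)) = a (j+N) - a j := by
      intro N
      exact Finset.sum_range_sub (fun n => a (j+n)) N
    have hsummable : Summable (fun n => a (j+n+1) - a (j+n)) := by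
      refine summable_of_sum_range_le (c := A - a j) hnn fun N => ?_
      rw [hpart N]
      linarith [haA (j+N)]
    have htendj : Tendsto (fun N => a (j+N)) atTop (nhds A) := by
      apply htend.comp
      exact tendsto_atTop_mono (fun N => Nat.le_add_left N j) tendsto_id
    have htsum : ∑' n, (a (j+n+1) - a (j+n)) = A - a j := by
      have hpart' : Tendsto (fun N => ∑ n ∈ Finset.range N, (a (j+n+1) - a (j+n)))
          atTop (nhds (A - a j)) := by
        simp only [hpart]
        exact htendj.sub tendsto_const_nhds
      exact tendsto_nhds_unique hsummable.hasSum.tendsto_sum_nat hpart'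
    show ENNReal.ofReal (A - a j) = ∑' n, D (j + n)
    rw [← htsum, ENNReal.ofReal_tsum_of_nonneg hnn hsummable]
  -- per-index Cauchy-Schwarz bound
  have hkey : ∀ j : ℕ, (B (j+1))^2 * Q^(j+1)
      ≤ c₂ * (Tq^(j+1) * ∑' n, (D (j+1+n))^2 * Tq^(j+1+n)) := by
    intro j
    have hsplit : B (j+1) = ∑' n, (D (j+1+n) * U^(j+1+n)) * Vu^(j+1+n) := by
      rw [hBD (j+1)]
      congr 1
      funext n
      rw [mul_assoc, ← mul_pow, hUVu, one_pow, mul_one]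
    have hcs := cs_tsum_sq (fun n => D (j+1+n) * U^(j+1+n)) (fun n => Vu^(j+1+n))
    rw [← hsplit] at hcs
    have hg : ∑' n : ℕ, (Vu^(j+1+n))^2 = W^(j+1) * (1-W)⁻¹ := by
      have : ∀ n : ℕ, (Vu^(j+1+n))^2 = W^(j+1) * W^n := by
        intro n
        rw [← pow_mul, mul_comm (j+1+n) 2, pow_mul, hVu2, pow_add]
      simp only [this]
      rw [ENNReal.tsum_mul_left, ENNReal.tsum_geometric]
    have hf : ∀ n : ℕ, (D (j+1+n) * U^(j+1+n))^2 = (D (j+1+n))^2 * Tq^(j+1+n) := by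
      intro n
      rw [mul_pow, ← pow_mul, mul_comm (j+1+n) 2, pow_mul, hU2]
    simp only [hf, hg] at hcs
    calc (B (j+1))^2 * Q^(j+1)
        ≤ (∑' n, (D (j+1+n))^2 * Tq^(j+1+n)) * (W^(j+1) * (1-W)⁻¹) * Q^(j+1) :=
          mul_le_mul_left hcs _
      _ = c₂ * (Tq^(j+1) * ∑' n, (D (j+1+n))^2 * Tq^(j+1+n)) := by
          have h' : Q^(j+1) * W^(j+1) = Tq^(j+1) := by rw [← mul_pow, hQW]
          rw [hc2def, ← h']
          ring
  -- sum the bound and rearrange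
  have hgeo : ∀ i : ℕ, ∑ j ∈ Finset.range i, Tq^(j+1) ≤ Tq^i * c₂ := by
    intro i
    rw [← Finset.sum_range_reflect (fun j => Tq^(j+1)) i]
    have heq : ∀ m ∈ Finset.range i, Tq^(i-1-m+1) = Tq^i * W^m := by
      intro m hm
      rw [Finset.mem_range] at hm
      obtain ⟨k, rfl⟩ : ∃ k, i = k + 1 + m := ⟨i - 1 - m, by omega⟩
      have h1 : k + 1 + m - 1 - m + 1 = k + 1 := by omega
      rw [h1]
      conv_rhs => rw [pow_add Tq (k+1) m]
      rw [mul_assoc, ← mul_pow, hTqW, one_pow, mul_one]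
    rw [Finset.sum_congr rfl heq, ← Finset.mul_sum]
    refine mul_le_mul_right ?_ _
    rw [hc2def, ← ENNReal.tsum_geometric]
    exact ENNReal.sum_le_tsum _
  calc ENNReal.ofReal ((1 - t⁻¹)^2) *
        ∑' k : ℕ, ENNReal.ofReal ((A - a (k+1))^2 * (2:ℝ)^(((k:ℝ)+1)*(δ+1)))
      = (1-W)^2 * ∑' k : ℕ, (B (k+1))^2 * Q^(k+1) := by
        rw [tsum_congr hLHS, ENNReal.ofReal_pow (by linarith), ENNReal.ofReal_sub _ (by positivity),
          ENNReal.ofReal_one]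
    _ ≤ (1-W)^2 * ∑' j : ℕ, c₂ * (Tq^(j+1) * ∑' n, (D (j+1+n))^2 * Tq^(j+1+n)) :=
        mul_le_mul_right (ENNReal.tsum_le_tsum hkey) _
    _ = (1-W)^2 * c₂ * ∑' j : ℕ, ∑' n : ℕ, Tq^(j+1) * ((D (j+1+n))^2 * Tq^(j+1+n)) := by
        have hin : ∀ j:ℕ, ∑' n : ℕ, Tq^(j+1) * ((D (j+1+n))^2 * Tq^(j+1+n))
            = Tq^(j+1) * ∑' n : ℕ, (D (j+1+n))^2 * Tq^(j+1+n) := fun j => ENNReal.tsum_mul_left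
        rw [ENNReal.tsum_mul_left, ← mul_assoc, tsum_congr hin]
    _ ≤ (1-W)^2 * c₂ * ∑' i : ℕ, (∑ j ∈ Finset.range i, Tq^(j+1)) * ((D i)^2 * Tq^i) := by
        refine mul_le_mul_right ?_ _
        have h1 : ∑' (j:ℕ) (n:ℕ), Tq^(j+1) * ((D (j+1+n))^2 * Tq^(j+1+n))
            = ∑' (p : ℕ×ℕ), Tq^(p.1+1) * ((D (p.1+1+p.2))^2 * Tq^(p.1+1+p.2)) :=
          (ENNReal.tsum_prod'
            (f := fun p : ℕ×ℕ => Tq^(p.1+1) * ((D (p.1+1+p.2))^2 * Tq^(p.1+1+p.2)))).symm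
        have h2 : ∑' (p : ℕ×ℕ), (if p.2 + 1 ≤ p.1 then Tq^(p.2+1) * ((D p.1)^2 * Tq^p.1) else 0)
            = ∑' (i:ℕ), ∑' (j:ℕ), (if j + 1 ≤ i then Tq^(j+1) * ((D i)^2 * Tq^i) else 0) :=
          ENNReal.tsum_prod'
            (f := fun p : ℕ×ℕ => if p.2 + 1 ≤ p.1 then Tq^(p.2+1) * ((D p.1)^2 * Tq^p.1) else 0)
        rw [h1]
        have hinj : Function.Injective (fun p : ℕ × ℕ => (p.1+1+p.2, p.1)) := by
          intro p p' h
          simp only [Prod.mk.injEq] at h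
          exact Prod.ext h.2 (by omega)
        refine le_trans (Summable.tsum_le_tsum_of_inj
          (g := fun p : ℕ×ℕ => if p.2 + 1 ≤ p.1 then Tq^(p.2+1) * ((D p.1)^2 * Tq^p.1) else 0)
          (fun p : ℕ × ℕ => (p.1+1+p.2, p.1)) hinj
          (fun _ _ => zero_le) ?_ ENNReal.summable ENNReal.summable) ?_
        · rintro ⟨j, n⟩
          simp only
          rw [if_pos (by omega)]
        · rw [h2]
          refine ENNReal.tsum_le_tsum fun i => ?_
          rw [tsum_eq_sum (s := Finset.range i)
            (fun j hj => if_neg (by simp only [Finset.mem_range] at hj; omega))]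
          rw [Finset.sum_congr rfl (fun j hj => if_pos (by
            simp only [Finset.mem_range] at hj; omega)), ← Finset.sum_mul]
    _ ≤ (1-W)^2 * c₂ * ∑' i : ℕ, (Tq^i * c₂) * ((D i)^2 * Tq^i) := by
        refine mul_le_mul_right (ENNReal.tsum_le_tsum fun i => mul_le_mul_left (hgeo i) _) _
    _ ≤ (1-W)^2 * c₂ * ∑' i : ℕ, c₂ * ((D i)^2 * Q^(i+1)) := by
        refine mul_le_mul_right (ENNReal.tsum_le_tsum fun i => ?_) _
        calc Tq^i * c₂ * ((D i)^2 * Tq^i) = c₂ * ((D i)^2 * (Tq^i * Tq^i)) := by ring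
          _ = c₂ * ((D i)^2 * Q^i) := by rw [← mul_pow, ← sq, hTq2]
          _ ≤ c₂ * ((D i)^2 * Q^(i+1)) :=
            mul_le_mul_right (mul_le_mul_right (pow_le_pow_right₀ hQ1 (Nat.le_succ i)) _) _
    _ = ((1-W)^2 * (c₂ * c₂)) * ∑' i : ℕ, (D i)^2 * Q^(i+1) := by
        rw [ENNReal.tsum_mul_left]; ring
    _ = ∑' k : ℕ, ENNReal.ofReal ((a (k+1) - a k)^2 * (2:ℝ)^(((k:ℝ)+1)*(δ+1))) := by
        rw [tsum_congr hRHS]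
        have : (1-W)^2 * (c₂ * c₂) = 1 := by
          rw [hc2def, ← sq, ← mul_pow, ENNReal.mul_inv_cancel h1W0 h1Wtop, one_pow]
        rw [this, one_mul]
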